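/- arXiv:1607.04443 — 2 statements merged into one kernel-verified Lean document; each statement's English description precedes it below -/
import Mathlib

section
/- Let β > 0 and let u : [0, ∞) → ℝ be differentiable with u(0) = 1 and u'(t) ≥ P_β(u(t)) for every t ≥ 0. Then u(t) ≥ α₋(β) for every t ≥ 0, where α₋(β) is the smaller root of P_β. -/
open Topology Filter


/-- Let `β > 0` and let `u : [0, ∞) → ℝ` be differentiable with `u 0 = 1` and
`u'(t) ≥ P_β(u(t))` for every `t ≥ 0`. Then `u(t) ≥ α₋(β)` for every `t ≥ 0`,
where `α₋(β) = a − √(a² − a + 1/6)`, `a = 5/6 + 2/(3β²)`, is the smaller root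
of `P_β`. -/
theorem stmt_8 (β : ℝ) (hβ : 0 < β) (u : ℝ → ℝ)
    (hdiff : ∀ t, 0 ≤ t → DifferentiableAt ℝ u t)
    (hu0 : u 0 = 1)
    (hderiv : ∀ t, 0 ≤ t →
      3 * β ^ 2 * (u t) ^ 2 - (5 * β ^ 2 + 4) * u t + 2 * (1 + β ^ 2) ≤ deriv u t) :
    ∀ t, 0 ≤ t →
      (5 / 6 + 2 / (3 * β ^ 2)) -
        Real.sqrt ((5 / 6 + 2 / (3 * β ^ 2)) ^ 2 - (5 / 6 + 2 / (3 * β ^ 2)) + 1 / 6) ≤ u t := by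
  have hβ2 : (0:ℝ) < β ^ 2 := by positivity
  set a : ℝ := 5 / 6 + 2 / (3 * β ^ 2) with ha_def
  set r : ℝ := Real.sqrt (a ^ 2 - a + 1 / 6) with hr_def
  have hb : (0:ℝ) < 2 / (3 * β ^ 2) := by positivity
  have hagt : 5 / 6 < a := by rw [ha_def]; linarith
  have hD : (0:ℝ) ≤ a ^ 2 - a + 1 / 6 := by nlinarith
  have hr0 : 0 ≤ r := Real.sqrt_nonneg _
  have hr2 : r * r = a ^ 2 - a + 1 / 6 := Real.mul_self_sqrt hD
  clear_value a r
  have hc1 : a - r < 1 := by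
    by_contra h
    push_neg at h
    have h1 : r ≤ a - 1 := by linarith
    nlinarith [mul_le_mul h1 h1 hr0 (by linarith : (0:ℝ) ≤ a - 1)]
  have ha3 : 3 * β ^ 2 * a = 5 / 2 * β ^ 2 + 2 := by
    rw [ha_def]; field_simp; ring
  have hP : ∀ x : ℝ, x < a - r →
      0 < 3 * β ^ 2 * x ^ 2 - (5 * β ^ 2 + 4) * x + 2 * (1 + β ^ 2) := by
    intro x hx
    have h1 : 0 < (a - x) - r := by linarith
    have h2 : 0 < (a - x) + r := by linarith
    have key : 3 * β ^ 2 * x ^ 2 - (5 * β ^ 2 + 4) * x + 2 * (1 + β ^ 2)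
        = 3 * (β ^ 2 * (((a - x) - r) * ((a - x) + r))) := by
      linear_combination (2 * x - 1) * ha3 + 3 * β ^ 2 * hr2
    rw [key]
    positivity
  intro t ht
  by_contra hcon
  push_neg at hcon
  have huc : ContinuousOn u (Set.Icc 0 t) := fun x hx =>
    ((hdiff x hx.1).continuousAt).continuousWithinAt
  set S : Set ℝ := Set.Icc 0 t ∩ u ⁻¹' Set.Iic (u t) with hS_def
  have htS : t ∈ S := ⟨⟨ht, le_refl t⟩, Set.mem_preimage.mpr (Set.mem_Iic.mpr le_rfl)⟩
  have hScl : IsClosed S := huc.preimage_isClosed_of_isClosed isClosed_Icc isClosed_Iic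
  have hScomp : IsCompact S :=
    (isCompact_Icc (a := (0:ℝ)) (b := t)).of_isClosed_subset hScl Set.inter_subset_left
  have hsmem : sInf S ∈ S := hScomp.sInf_mem ⟨t, htS⟩
  set s : ℝ := sInf S with hs_def
  obtain ⟨⟨hs0', hst⟩, hsle⟩ := hsmem
  have hsle' : u s ≤ u t := hsle
  have hs0 : 0 < s := by
    rcases hs0'.lt_or_eq with h | h
    · exact h
    · exfalso
      rw [← h] at hsle'
      rw [hu0] at hsle'
      linarith
  have hmin : ∀ x, 0 ≤ x → x < s → u t < u x := by
    intro x hx0 hxs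
    by_contra h
    push_neg at h
    have hxS : x ∈ S := ⟨⟨hx0, hxs.le.trans hst⟩, Set.mem_preimage.mpr (Set.mem_Iic.mpr h)⟩
    exact absurd (csInf_le hScomp.bddBelow hxS) (not_le.2 hxs)
  have hus : u s < a - r := lt_of_le_of_lt hsle' hcon
  have hds : 0 < deriv u s := lt_of_lt_of_le (hP (u s) hus) (hderiv s hs0.le)
  have hd : HasDerivWithinAt u (deriv u s) (Set.Iio s) s :=
    ((hdiff s hs0.le).hasDerivAt).hasDerivWithinAt
  have htend : Filter.Tendsto (slope u s) (𝓝[Set.Iio s] s) (𝓝 (deriv u s)) := by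
    rw [hasDerivWithinAt_iff_tendsto_slope' (by simp)] at hd
    exact hd
  have hev : ∀ᶠ x in 𝓝[Set.Iio s] s, slope u s x ≤ 0 := by
    have h0 : ∀ᶠ x in 𝓝[Set.Iio s] s, 0 < x :=
      eventually_nhdsWithin_of_eventually_nhds (eventually_gt_nhds hs0)
    filter_upwards [h0, self_mem_nhdsWithin] with x hx0 hxs
    have hxlt : x < s := hxs
    have hux : u s ≤ u x := (hmin x hx0.le hxlt).le.trans' hsle'
    rw [slope_def_field]
    exact div_nonpos_of_nonneg_of_nonpos (sub_nonneg.2 hux) (by linarith : x - s ≤ 0)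
  have : deriv u s ≤ 0 := le_of_tendsto htend hev
  linarith
end

section
/- Let β > 0 and let u : [0, ∞) → ℝ be differentiable with 0 ≤ u(t) ≤ 1 for all t, u(0) = 1, u'(t) ≥ P_β(u(t)) for all t ≥ 0, and u'(t) ≤ −λ(β)(u(t) − α₋(β)) for all t ≥ 0. Then lim_{t → ∞} u(t) = α₋(β). (This is the deterministic core of Theorem 1: applied to u(t) = E[I_t], the mean overlap of the two-point directed polymer, it yields lim_{t→∞} E[I_t] = α₋(β) and hence the free energy p(β) = −(β²/2)·α₋(β).) -/
open Filter

/-- Deterministic core of Theorem 1: for `β > 0`, if `u : [0, ∞) → ℝ` is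
differentiable with `0 ≤ u t ≤ 1`, `u 0 = 1`, `u'(t) ≥ P_β(u(t))` and
`u'(t) ≤ −λ(β)(u(t) − α₋(β))` for all `t ≥ 0`, then `u t → α₋(β)` as `t → ∞`,
where `α₋(β) = a − √(a² − a + 1/6)`, `a = 5/6 + 2/(3β²)`, and
`λ(β) = (5β² + 4) − 3β²(1 + α₋(β))`. -/
theorem stmt_10 (β : ℝ) (hβ : 0 < β) (u : ℝ → ℝ)
    (hdiff : ∀ t, 0 ≤ t → DifferentiableAt ℝ u t)
    (hbdd : ∀ t, 0 ≤ t → 0 ≤ u t ∧ u t ≤ 1)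
    (hu0 : u 0 = 1)
    (hlower : ∀ t, 0 ≤ t →
      3 * β ^ 2 * (u t) ^ 2 - (5 * β ^ 2 + 4) * u t + 2 * (1 + β ^ 2) ≤ deriv u t)
    (hupper : ∀ t, 0 ≤ t →
      deriv u t ≤
        -((5 * β ^ 2 + 4) - 3 * β ^ 2 *
            (1 + ((5 / 6 + 2 / (3 * β ^ 2)) -
              Real.sqrt ((5 / 6 + 2 / (3 * β ^ 2)) ^ 2 - (5 / 6 + 2 / (3 * β ^ 2)) + 1 / 6)))) *
          (u t - ((5 / 6 + 2 / (3 * β ^ 2)) -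
            Real.sqrt ((5 / 6 + 2 / (3 * β ^ 2)) ^ 2 - (5 / 6 + 2 / (3 * β ^ 2)) + 1 / 6)))) :
    Tendsto u atTop
      (nhds ((5 / 6 + 2 / (3 * β ^ 2)) -
        Real.sqrt ((5 / 6 + 2 / (3 * β ^ 2)) ^ 2 - (5 / 6 + 2 / (3 * β ^ 2)) + 1 / 6))) := by
  set a : ℝ := 5 / 6 + 2 / (3 * β ^ 2) with ha
  set s : ℝ := Real.sqrt (a ^ 2 - a + 1 / 6) with hs
  set α : ℝ := a - s with hα
  set L : ℝ := (5 * β ^ 2 + 4) - 3 * β ^ 2 * (1 + α) with hL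
  have hβ2 : 0 < β ^ 2 := by positivity
  have hagt : 5 / 6 < a := by
    have : 0 < 2 / (3 * β ^ 2) := by positivity
    linarith
  have hdisc : 0 < a ^ 2 - a + 1 / 6 := by nlinarith
  have hs2 : s ^ 2 = a ^ 2 - a + 1 / 6 := Real.sq_sqrt hdisc.le
  have hspos : 0 < s := Real.sqrt_pos.mpr hdisc
  clear_value a s α L
  have hsgt1 : 1 - a < s := by
    rcases le_or_gt s (1 - a) with h | h
    · exfalso
      have h2 : s * s ≤ (1 - a) * (1 - a) := mul_le_mul h h hspos.le (by linarith)
      nlinarith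
    · exact h
  have hsgt2 : a - 1 < s := by
    rcases le_or_gt s (a - 1) with h | h
    · exfalso
      have h2 : s * s ≤ (a - 1) * (a - 1) := mul_le_mul h h hspos.le (by linarith)
      nlinarith
    · exact h
  have h3β : (3 : ℝ) * β ^ 2 ≠ 0 := by positivity
  have haa : 3 * β ^ 2 * a = 5 * β ^ 2 / 2 + 2 := by
    rw [ha]; field_simp; ring
  have hLpos : 0 < L := by
    have hLeq : L = 3 * β ^ 2 * (a - 1 + s) := by
      rw [hL, hα]; linear_combination (-2 : ℝ) * haa
    have h4 : 0 < a - 1 + s := by linarith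
    rw [hLeq]; positivity
  have hcont : ∀ t : ℝ, 0 ≤ t → ContinuousAt u t := fun t ht => (hdiff t ht).continuousAt
  have hα1 : α < 1 := by rw [hα]; linarith
  have hα1' : 1 < a + s := by linarith
  -- positivity of the quadratic below α
  have hquad : ∀ x : ℝ, x ≤ 1 → x < α →
      0 < 3 * β ^ 2 * x ^ 2 - (5 * β ^ 2 + 4) * x + 2 * (1 + β ^ 2) := by
    intro x hx1 hx2
    have h1 : 0 < (a + s) - x := by linarith
    have h2 : 0 < (a - s) - x := by rw [hα] at hx2; linarith
    have h3 : 0 < 3 * β ^ 2 * (((a + s) - x) * ((a - s) - x)) := by positivity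
    have h4 : 3 * β ^ 2 * x ^ 2 - (5 * β ^ 2 + 4) * x + 2 * (1 + β ^ 2)
        = 3 * β ^ 2 * (((a + s) - x) * ((a - s) - x)) := by
      linear_combination (2 * x - 1) * haa + 3 * β ^ 2 * hs2
    rw [h4]; exact h3
  -- Step 1 : u stays above α
  have hge : ∀ t, 0 ≤ t → α ≤ u t := by
    intro t₁ ht₁
    by_contra hlt
    push_neg at hlt
    set S : Set ℝ := Set.Icc 0 t₁ ∩ u ⁻¹' Set.Ici α with hS
    have huc : ContinuousOn u (Set.Icc 0 t₁) := fun t ht => (hcont t ht.1).continuousWithinAt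
    have hScl : IsClosed S := huc.preimage_isClosed_of_isClosed isClosed_Icc isClosed_Ici
    have hScp : IsCompact S := isCompact_Icc.of_isClosed_subset hScl Set.inter_subset_left
    have h0S : (0 : ℝ) ∈ S := ⟨⟨le_refl 0, ht₁⟩, by simp [hu0]; linarith⟩
    have hSne : S.Nonempty := ⟨0, h0S⟩
    have hTS : sSup S ∈ S := hScp.sSup_mem hSne
    set T : ℝ := sSup S with hT
    have hT0 : 0 ≤ T := hTS.1.1
    have hTα : α ≤ u T := hTS.2
    have hTlt : T < t₁ := lt_of_le_of_ne hTS.1.2 (by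
      intro h; rw [h] at hTα; linarith)
    have hmid : ∀ t ∈ Set.Ioc T t₁, u t < α := by
      intro t ht
      by_contra h
      push_neg at h
      have htS : t ∈ S := ⟨⟨le_trans hT0 ht.1.le, ht.2⟩, h⟩
      have := le_csSup hScp.bddAbove htS
      exact absurd this (not_le.mpr ht.1)
    have hmono : StrictMonoOn u (Set.Icc T t₁) := by
      apply strictMonoOn_of_deriv_pos (convex_Icc T t₁)
      · exact fun t ht => (hcont t (le_trans hT0 ht.1)).continuousWithinAt
      · intro t ht
        rw [interior_Icc] at ht
        have ht0 : 0 ≤ t := le_trans hT0 ht.1.le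
        have hub := hbdd t ht0
        have h1 := hlower t ht0
        have h2 := hquad (u t) hub.2 (hmid t ⟨ht.1, ht.2.le⟩)
        linarith
    have := hmono (Set.left_mem_Icc.mpr hTlt.le) (Set.right_mem_Icc.mpr hTlt.le) hTlt
    linarith
  -- Step 2 : exponential upper bound via v t = (u t − α) e^{L t}
  set v : ℝ → ℝ := fun t => (u t - α) * Real.exp (L * t) with hv
  have hvderiv : ∀ t : ℝ, 0 < t →
      HasDerivAt v (deriv u t * Real.exp (L * t) + (u t - α) * (Real.exp (L * t) * L)) t := by
    intro t ht
    have h1 : HasDerivAt u (deriv u t) t := (hdiff t ht.le).hasDerivAt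
    have h2 : HasDerivAt (fun x : ℝ => Real.exp (L * x)) (Real.exp (L * t) * L) t := by
      have h3 : HasDerivAt (fun x : ℝ => L * x) L t := by
        simpa using (hasDerivAt_id t).const_mul L
      exact (Real.hasDerivAt_exp (L * t)).comp t h3
    exact (h1.sub_const α).mul h2
  have hanti : AntitoneOn v (Set.Ici 0) := by
    apply antitoneOn_of_deriv_nonpos (convex_Ici 0)
    · intro t ht
      exact (((hcont t ht).sub continuousAt_const).mul
        ((Real.continuous_exp.comp (continuous_const.mul continuous_id)).continuousAt)).continuousWithinAt
    · intro t ht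
      rw [interior_Ici] at ht
      exact (hvderiv t ht).differentiableAt.differentiableWithinAt
    · intro t ht
      rw [interior_Ici] at ht
      rw [(hvderiv t ht).deriv]
      have hup := hupper t ht.le
      have hexp : (0 : ℝ) < Real.exp (L * t) := Real.exp_pos _
      nlinarith [mul_le_mul_of_nonneg_right hup hexp.le]
  have hub2 : ∀ t, 0 ≤ t → u t ≤ α + (1 - α) * Real.exp (-(L * t)) := by
    intro t ht
    have h1 : v t ≤ v 0 := hanti (Set.self_mem_Ici) (Set.mem_Ici.mpr ht) ht
    have hv0 : v 0 = 1 - α := by simp [hv, hu0]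
    rw [hv0] at h1
    have h3 : (u t - α) * Real.exp (L * t) ≤ 1 - α := h1
    have hexp : (0 : ℝ) < Real.exp (L * t) := Real.exp_pos _
    have h4 : u t - α ≤ (1 - α) * Real.exp (-(L * t)) := by
      have h5 := mul_le_mul_of_nonneg_right h3 (Real.exp_pos (-(L * t))).le
      rw [mul_assoc, ← Real.exp_add] at h5
      simpa using h5
    linarith
  -- Step 3 : squeeze
  have hlim : Tendsto (fun t : ℝ => α + (1 - α) * Real.exp (-(L * t))) atTop (nhds α) := by
    have h1 : Tendsto (fun t : ℝ => L * t) atTop atTop := tendsto_id.const_mul_atTop hLpos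
    have h2 : Tendsto (fun t : ℝ => Real.exp (-(L * t))) atTop (nhds 0) :=
      Real.tendsto_exp_neg_atTop_nhds_zero.comp h1
    have h3 := (h2.const_mul (1 - α)).const_add α
    simpa using h3
  apply tendsto_of_tendsto_of_tendsto_of_le_of_le' tendsto_const_nhds hlim
  · filter_upwards [eventually_ge_atTop (0 : ℝ)] with t ht
    exact hge t ht
  · filter_upwards [eventually_ge_atTop (0 : ℝ)] with t ht
    exact hub2 t ht
end
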